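/- Let x, y, z be vectors in ℝ^d with ‖x − y‖ = r, ‖x − z‖ ≤ r, and ‖y − z‖ ≤ r. Let x* = (1 − μ)x + μy for some μ ∈ (0,1). Then ‖z − x*‖ ≤ r·√(1 − μ + μ²). -/

import Mathlib

theorem stmt0 (d : ℕ) (r μ : ℝ) (hr : 0 < r) (hμ : μ ∈ Set.Ioo (0:ℝ) 1)
    (x y z : EuclideanSpace ℝ (Fin d))
    (hxy : ‖x - y‖ = r) (hxz : ‖x - z‖ ≤ r) (hyz : ‖y - z‖ ≤ r) :
    ‖z - ((1 - μ) • x + μ • y)‖ ≤ r * Real.sqrt (1 - μ + μ ^ 2) := by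
  obtain ⟨hμ0, hμ1⟩ := hμ
  set a := z - x with ha
  set b := z - y with hb
  have hv : z - ((1 - μ) • x + μ • y) = (1 - μ) • a + μ • b := by
    simp only [ha, hb]; module
  have hab : a - b = y - x := by simp only [ha, hb]; abel
  have hyx : ‖y - x‖ = r := by rw [← neg_sub, norm_neg, hxy]
  have hA : ‖a‖ ≤ r := by rw [ha, ← neg_sub, norm_neg]; exact hxz
  have hB : ‖b‖ ≤ r := by rw [hb, ← neg_sub, norm_neg]; exact hyz
  have hinner : ‖a - b‖ ^ 2 = ‖a‖ ^ 2 - 2 * inner ℝ a b + ‖b‖ ^ 2 := by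
    rw [@norm_sub_sq_real]
  have hab2 : ‖a - b‖ ^ 2 = r ^ 2 := by rw [hab, hyx]
  have hsum : ‖(1 - μ) • a + μ • b‖ ^ 2
      = (1 - μ) ^ 2 * ‖a‖ ^ 2 + 2 * ((1 - μ) * μ * inner ℝ a b) + μ ^ 2 * ‖b‖ ^ 2 := by
    rw [@norm_add_sq_real, real_inner_smul_left, real_inner_smul_right,
      norm_smul, norm_smul]
    have h1 : |1 - μ| = 1 - μ := abs_of_nonneg (by linarith)
    have h2 : |μ| = μ := abs_of_nonneg (le_of_lt hμ0)
    simp only [Real.norm_eq_abs, h1, h2]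
    ring
  have hi : (inner ℝ a b : ℝ) = (‖a‖ ^ 2 + ‖b‖ ^ 2 - r ^ 2) / 2 := by linarith
  have hA2 : ‖a‖ ^ 2 ≤ r ^ 2 := pow_le_pow_left₀ (norm_nonneg a) hA 2
  have hB2 : ‖b‖ ^ 2 ≤ r ^ 2 := pow_le_pow_left₀ (norm_nonneg b) hB 2
  have hsq : ‖(1 - μ) • a + μ • b‖ ^ 2 ≤ r ^ 2 * (1 - μ + μ ^ 2) := by
    rw [hsum, hi]
    nlinarith [mul_nonneg (by linarith : (0:ℝ) ≤ 1 - μ) (sub_nonneg.2 hA2),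
      mul_nonneg hμ0.le (sub_nonneg.2 hB2)]
  rw [hv]
  have h1 : ‖(1 - μ) • a + μ • b‖ = Real.sqrt (‖(1 - μ) • a + μ • b‖ ^ 2) := by
    rw [Real.sqrt_sq (norm_nonneg _)]
  rw [h1]
  calc Real.sqrt (‖(1 - μ) • a + μ • b‖ ^ 2) ≤ Real.sqrt (r ^ 2 * (1 - μ + μ ^ 2)) :=
        Real.sqrt_le_sqrt hsq
    _ = r * Real.sqrt (1 - μ + μ ^ 2) := by
        rw [Real.sqrt_mul (sq_nonneg r), Real.sqrt_sq hr.le]
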